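/- Let k be a commutative ring and I an index set. Let a : I → I → ℤ be a symmetric function with a i i = 2 for all i and a i j ∈ {0, −1} for i ≠ j, and let v : I → I → kˣ be invertible scalars with (v i j)·(v j i) = 1 whenever a i j = −1. Define c : I → I → k by c j i = 2 if j = i, c j i = v j i if a i j = −1, and c j i = 0 if a i j = 0 with i ≠ j. Let M be the free k-module with basis (b_j)_{j∈I} and for each i ∈ I let σ_i : M → M be the k-linear map with σ_i(b_j) = b_j − (c j i)·b_i. Then for all i, j ∈ I with a i j = −1, one has σ_i ∘ σ_j ∘ σ_i = σ_j ∘ σ_i ∘ σ_j. -/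
import Mathlib


/-- The linear map on the free module `I →₀ k` sending the basis vector `b_j` to
`b_j − (c j i) • b_i`. -/
noncomputable def bubbleReflection {k : Type*} [CommRing k] {I : Type*}
    (c : I → I → k) (i : I) : (I →₀ k) →ₗ[k] (I →₀ k) :=
  Finsupp.linearCombination k fun j => Finsupp.single j 1 - c j i • Finsupp.single i 1

lemma bubbleReflection_single {k : Type*} [CommRing k] {I : Type*}
    (c : I → I → k) (i l : I) :
    bubbleReflection c i (Finsupp.single l 1) =
      Finsupp.single l 1 - c l i • Finsupp.single i 1 := by
  simp [bubbleReflection]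

/-- For a simply-laced symmetric Cartan datum `a` and edge scalars `v` with
`v i j · v j i = 1` on edges, the reflections `σ_i(b_j) = b_j − (c j i)·b_i`
(where `c i i = 2`, `c j i = v j i` on edges and `c j i = 0` otherwise) satisfy the braid relation when `a i j = −1`. -/
theorem bubbleReflection_braid {k : Type*} [CommRing k] {I : Type*}
    (a : I → I → ℤ) (v : I → I → kˣ) (c : I → I → k)
    (ha_symm : ∀ i j, a i j = a j i)
    (ha_diag : ∀ i, a i i = 2)
    (ha_off : ∀ i j, i ≠ j → a i j = 0 ∨ a i j = -1)
    (hv : ∀ i j, a i j = -1 → (v i j : k) * (v j i : k) = 1)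
    (hc_diag : ∀ i, c i i = 2)
    (hc_edge : ∀ i j, a i j = -1 → c j i = (v j i : k))
    (hc_orth : ∀ i j, i ≠ j → a i j = 0 → c j i = 0) :
    ∀ i j : I, a i j = -1 →
      (bubbleReflection c i) ∘ₗ (bubbleReflection c j) ∘ₗ (bubbleReflection c i) =
        (bubbleReflection c j) ∘ₗ (bubbleReflection c i) ∘ₗ (bubbleReflection c j) := by
  intro i j hij
  have hji : a j i = -1 := (ha_symm i j ▸ hij)
  have hprod : c i j * c j i = 1 := by
    rw [hc_edge j i hji, hc_edge i j hij]
    exact hv i j hij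
  have hii : c i i = 2 := hc_diag i
  have hjj : c j j = 2 := hc_diag j
  apply Finsupp.lhom_ext'
  intro l
  apply LinearMap.ext_ring
  simp only [LinearMap.comp_apply, Finsupp.lsingle_apply, bubbleReflection_single,
    map_sub, map_smul, smul_sub, hii, hjj]
  match_scalars
  all_goals
    first
    | ring1
    | linear_combination (c l i * c j i) * hprod
    | linear_combination (-(c l i * c j i)) * hprod
    | linear_combination (c l i + c l i * c j i) * hprod
    | linear_combination (-(c l i + c l i * c j i)) * hprod
    | linear_combination (c l j - c l i * c j i) * hprod
    | linear_combination (c l i * c j i - c l j) * hprod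
    | linear_combination (-(c l i)) * hprod
    | linear_combination (c l j) * hprod
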